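/- Let ρ be a compactly supported finite positive measure on ℝ, a ∈ ℝ, and define L(f) = −a f'(0) + ∫_ℝ (f(x) − f(0) − x f'(0)) x⁻² dρ(x) for f ∈ C_b²(ℝ) (where the integrand at x = 0 is interpreted as f''(0)/2). With ε(f) = f(0) and η(f)(x) = (f(x)−f(0))/x (η(f)(0) = f'(0)), the coboundary identity L(fg) = f(0) L(g) + ⟨η(f̄), η(g)⟩_{L²(ρ)} + L(f) g(0) holds for all f, g ∈ C_b²(ℝ). -/

import Mathlib

open MeasureTheory

/-- The cocycle map: `η(f)(x) = (f(x) − f(0))/x` for `x ≠ 0` and `η(f)(0) = f'(0)`. -/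
noncomputable def etaCocycle (f : ℝ → ℂ) : ℝ → ℂ :=
  fun x => if x = 0 then deriv f 0 else (f x - f 0) / x

/-- The generator `L(f) = −a f'(0) + ∫ (f(x) − f(0) − x f'(0)) x⁻² dρ(x)`, with the
integrand at `x = 0` interpreted as `f''(0)/2`. -/
noncomputable def genL (a : ℝ) (ρ : Measure ℝ) (f : ℝ → ℂ) : ℂ :=
  -(a : ℂ) * deriv f 0 +
    ∫ x : ℝ, (if x = 0 then deriv (deriv f) 0 / 2
      else (f x - f 0 - (x : ℂ) * deriv f 0) / (x : ℂ) ^ 2) ∂ρ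

private lemma aux_deriv_diff {h : ℝ → ℂ} (hh : ContDiff ℝ 2 h) :
    Differentiable ℝ (deriv h) := by
  have h2 : ContDiff ℝ (1 + 1) h := by norm_num; exact hh
  exact ((contDiff_succ_iff_deriv.mp h2).2.2).differentiable one_ne_zero

private lemma aux_mvt {h : ℝ → ℂ} {C : ℝ} (hd : Differentiable ℝ h)
    (hC : ∀ t, ‖deriv h t‖ ≤ C) (t : ℝ) : ‖h t - h 0‖ ≤ C * |t| := by
  simpa using Convex.norm_image_sub_le_of_norm_deriv_le (s := Set.univ)
    (fun x _ => hd x) (fun x _ => hC x) convex_univ (Set.mem_univ 0) (Set.mem_univ t)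

private lemma aux_taylor {h : ℝ → ℂ} {C : ℝ} (hh : ContDiff ℝ 2 h)
    (hC : ∀ t, ‖deriv (deriv h) t‖ ≤ C) (x : ℝ) :
    ‖h x - h 0 - (x : ℂ) * deriv h 0‖ ≤ C * x ^ 2 := by
  have hC0 : 0 ≤ C := (norm_nonneg _).trans (hC 0)
  have hd : Differentiable ℝ h := hh.differentiable two_ne_zero
  have hd2 : Differentiable ℝ (deriv h) := aux_deriv_diff hh
  have step1 : ∀ t : ℝ, ‖deriv h t - deriv h 0‖ ≤ C * |t| := aux_mvt hd2 hC
  set F : ℝ → ℂ := fun t => h t - h 0 - (t : ℂ) * deriv h 0 with hF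
  have hFd : ∀ t : ℝ, HasDerivAt F (deriv h t - deriv h 0) t := by
    intro t
    have h1 : HasDerivAt (fun t : ℝ => (t : ℂ) * deriv h 0) (deriv h 0) t := by
      simpa using ((hasDerivAt_id t).ofReal_comp.mul_const (deriv h 0))
    exact ((hd t).hasDerivAt.sub_const (h 0)).sub h1
  have hFderiv : ∀ t, deriv F t = deriv h t - deriv h 0 := fun t => (hFd t).deriv
  have key : ‖F x - F 0‖ ≤ (C * |x|) * ‖x - (0:ℝ)‖ := by
    refine Convex.norm_image_sub_le_of_norm_deriv_le (s := Set.uIcc 0 x)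
      (fun t _ => (hFd t).differentiableAt) (fun t ht => ?_) (convex_uIcc 0 x)
      Set.left_mem_uIcc Set.right_mem_uIcc
    rw [hFderiv]
    have habs : |t| ≤ |x| := by
      rcases Set.mem_uIcc.mp ht with h1 | h1 <;> rw [abs_le] <;>
        constructor <;> cases abs_cases x <;> nlinarith [h1.1, h1.2]
    exact (step1 t).trans (by nlinarith)
  have hF0 : F 0 = 0 := by simp [hF]
  rw [hF0, sub_zero] at key
  calc ‖F x‖ ≤ C * |x| * ‖x - (0:ℝ)‖ := key
    _ = C * x ^ 2 := by rw [sub_zero, Real.norm_eq_abs, mul_assoc, abs_mul_abs_self, sq]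

private lemma aux_eta_bound {h : ℝ → ℂ} {C : ℝ} (hd : Differentiable ℝ h)
    (hC : ∀ t, ‖deriv h t‖ ≤ C) (x : ℝ) :
    ‖if x = 0 then deriv h 0 else (h x - h 0) / (x:ℂ)‖ ≤ C := by
  by_cases hx : x = 0
  · simpa [hx] using hC 0
  · rw [if_neg hx, norm_div, Complex.norm_real, Real.norm_eq_abs,
      div_le_iff₀ (abs_pos.mpr hx)]
    exact aux_mvt hd hC x

private lemma aux_eta_meas {h : ℝ → ℂ} (hc : Continuous h) :
    Measurable (fun x : ℝ => if x = 0 then deriv h 0 else (h x - h 0) / (x:ℂ)) := by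
  refine Measurable.ite measurableSet_eq measurable_const ?_
  exact ((hc.measurable.sub measurable_const).div
    (Complex.measurable_ofReal.comp measurable_id))

private lemma aux_phi_bound {h : ℝ → ℂ} {C : ℝ} (hh : ContDiff ℝ 2 h)
    (hC : ∀ t, ‖h t‖ + ‖deriv h t‖ + ‖deriv (deriv h) t‖ ≤ C) (x : ℝ) :
    ‖if x = 0 then deriv (deriv h) 0 / 2
      else (h x - h 0 - (x:ℂ) * deriv h 0) / (x:ℂ) ^ 2‖ ≤ 3 * C := by
  have hCh : ∀ t, ‖h t‖ ≤ C := fun t => by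
    nlinarith [hC t, norm_nonneg (deriv h t), norm_nonneg (deriv (deriv h) t)]
  have hCd : ∀ t, ‖deriv h t‖ ≤ C := fun t => by
    nlinarith [hC t, norm_nonneg (h t), norm_nonneg (deriv (deriv h) t)]
  have hCdd : ∀ t, ‖deriv (deriv h) t‖ ≤ C := fun t => by
    nlinarith [hC t, norm_nonneg (h t), norm_nonneg (deriv h t)]
  have hC0 : 0 ≤ C := (norm_nonneg _).trans (hCh 0)
  by_cases hx : x = 0
  · rw [if_pos hx, norm_div]
    simp only [Complex.norm_ofNat]
    nlinarith [hCdd 0]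
  · rw [if_neg hx, norm_div, norm_pow, Complex.norm_real, Real.norm_eq_abs]
    have hx2 : (0:ℝ) < |x| ^ 2 := by positivity
    rw [div_le_iff₀ hx2]
    by_cases h1 : |x| ≤ 1
    · refine (aux_taylor hh hCdd x).trans ?_
      have : x ^ 2 = |x| ^ 2 := (sq_abs x).symm
      nlinarith [sq_nonneg x]
    · push_neg at h1
      have hb : ‖h x - h 0 - (x:ℂ) * deriv h 0‖ ≤ 2 * C + |x| * C := by
        calc ‖h x - h 0 - (x:ℂ) * deriv h 0‖
            ≤ ‖h x - h 0‖ + ‖(x:ℂ) * deriv h 0‖ := norm_sub_le _ _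
          _ ≤ (‖h x‖ + ‖h 0‖) + |x| * ‖deriv h 0‖ := by
              rw [norm_mul, Complex.norm_real, Real.norm_eq_abs]
              exact add_le_add (norm_sub_le _ _) le_rfl
          _ ≤ 2 * C + |x| * C := by
              have := hCh x; have := hCh 0; have := hCd 0
              nlinarith [abs_nonneg x]
      refine hb.trans ?_
      nlinarith [sq_abs x, sq_nonneg (|x| - 1)]

private lemma aux_phi_meas {h : ℝ → ℂ} (hc : Continuous h) :
    Measurable (fun x : ℝ => if x = 0 then deriv (deriv h) 0 / 2
      else (h x - h 0 - (x:ℂ) * deriv h 0) / (x:ℂ) ^ 2) := by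
  refine Measurable.ite measurableSet_eq measurable_const ?_
  exact (((hc.measurable.sub measurable_const).sub
    ((Complex.measurable_ofReal.comp measurable_id).mul_const _)).div
    ((Complex.measurable_ofReal.comp measurable_id).pow_const 2))

private lemma aux_phi_integrable {ρ : Measure ℝ} [IsFiniteMeasure ρ] {h : ℝ → ℂ}
    (hh : ContDiff ℝ 2 h)
    (hb : ∃ C, ∀ x, ‖h x‖ + ‖deriv h x‖ + ‖deriv (deriv h) x‖ ≤ C) :
    Integrable (fun x : ℝ => if x = 0 then deriv (deriv h) 0 / 2
      else (h x - h 0 - (x:ℂ) * deriv h 0) / (x:ℂ) ^ 2) ρ := by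
  obtain ⟨C, hC⟩ := hb
  exact (integrable_const (3 * C)).mono'
    (aux_phi_meas hh.continuous).aestronglyMeasurable
    (ae_of_all _ (aux_phi_bound hh hC))

/-- The coboundary identity
`L(fg) = f(0) L(g) + ⟨η(f̄), η(g)⟩_{L²(ρ)} + L(f) g(0)` for `f, g ∈ C_b²(ℝ)`. -/
theorem genL_coboundary
    (a : ℝ) (ρ : Measure ℝ) [IsFiniteMeasure ρ]
    (hK : ∃ K : Set ℝ, IsCompact K ∧ ρ Kᶜ = 0)
    (f g : ℝ → ℂ) (hf : ContDiff ℝ 2 f) (hg : ContDiff ℝ 2 g)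
    (hfb : ∃ C, ∀ x, ‖f x‖ + ‖deriv f x‖ + ‖deriv (deriv f) x‖ ≤ C)
    (hgb : ∃ C, ∀ x, ‖g x‖ + ‖deriv g x‖ + ‖deriv (deriv g) x‖ ≤ C) :
    genL a ρ (f * g)
      = f 0 * genL a ρ g
        + (∫ x : ℝ,
            (starRingEnd ℂ) (etaCocycle (fun t => (starRingEnd ℂ) (f t)) x)
              * etaCocycle g x ∂ρ)
        + genL a ρ f * g 0 := by
  obtain ⟨Cf, hCf⟩ := hfb
  obtain ⟨Cg, hCg⟩ := hgb
  have hfd : Differentiable ℝ f := hf.differentiable two_ne_zero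
  have hgd : Differentiable ℝ g := hg.differentiable two_ne_zero
  have hfd2 : Differentiable ℝ (deriv f) := aux_deriv_diff hf
  have hgd2 : Differentiable ℝ (deriv g) := aux_deriv_diff hg
  have hCf' : ∀ t, ‖deriv f t‖ ≤ Cf := fun t => by
    nlinarith [hCf t, norm_nonneg (f t), norm_nonneg (deriv (deriv f) t)]
  have hCg' : ∀ t, ‖deriv g t‖ ≤ Cg := fun t => by
    nlinarith [hCg t, norm_nonneg (g t), norm_nonneg (deriv (deriv g) t)]
  -- derivative formulas
  have d1 : deriv (f * g) = fun x => deriv f x * g x + f x * deriv g x :=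
    funext fun x => deriv_mul (hfd x) (hgd x)
  have d10 : deriv (f * g) 0 = deriv f 0 * g 0 + f 0 * deriv g 0 := by rw [d1]
  have d2 : deriv (deriv (f * g)) 0
      = deriv (deriv f) 0 * g 0 + deriv f 0 * deriv g 0
        + (deriv f 0 * deriv g 0 + f 0 * deriv (deriv g) 0) := by
    rw [d1, deriv_fun_add (f := fun x => deriv f x * g x) (g := fun x => f x * deriv g x) ((hfd2 0).mul (hgd 0)) ((hfd 0).mul (hgd2 0)),
      deriv_fun_mul (hfd2 0) (hgd 0), deriv_fun_mul (hfd 0) (hgd2 0)]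
  -- the conjugate of the eta cocycle of the conjugate
  have hconj : ∀ x : ℝ, (starRingEnd ℂ) (etaCocycle (fun t => (starRingEnd ℂ) (f t)) x)
      = if x = 0 then deriv f 0 else (f x - f 0) / (x:ℂ) := by
    intro x
    unfold etaCocycle
    split_ifs with hx
    · have : deriv (fun t => (starRingEnd ℂ) (f t)) 0 = star (deriv f 0) := deriv.star
      rw [this, starRingEnd_apply, star_star]
    · rw [map_div₀, map_sub]
      rw [Complex.conj_conj, Complex.conj_conj, Complex.conj_ofReal]
  -- pointwise coboundary identity
  have key : ∀ x : ℝ,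
      (if x = 0 then deriv (deriv (f * g)) 0 / 2
        else ((f * g) x - (f * g) 0 - (x:ℂ) * deriv (f * g) 0) / (x:ℂ) ^ 2)
      = f 0 * (if x = 0 then deriv (deriv g) 0 / 2
          else (g x - g 0 - (x:ℂ) * deriv g 0) / (x:ℂ) ^ 2)
        + ((starRingEnd ℂ) (etaCocycle (fun t => (starRingEnd ℂ) (f t)) x)
            * etaCocycle g x
          + (if x = 0 then deriv (deriv f) 0 / 2
              else (f x - f 0 - (x:ℂ) * deriv f 0) / (x:ℂ) ^ 2) * g 0) := by
    intro x
    rw [hconj x]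
    unfold etaCocycle
    by_cases hx : x = 0
    · subst hx
      simp only [Pi.mul_apply]
      simp only [if_true]
      rw [d2]
      ring
    · have hx' : (x:ℂ) ≠ 0 := Complex.ofReal_ne_zero.mpr hx
      simp only [if_neg hx, Pi.mul_apply]
      rw [d10]
      field_simp
      ring
  -- integrability
  have hintF : Integrable (fun x : ℝ => if x = 0 then deriv (deriv f) 0 / 2
      else (f x - f 0 - (x:ℂ) * deriv f 0) / (x:ℂ) ^ 2) ρ :=
    aux_phi_integrable hf ⟨Cf, hCf⟩
  have hintG : Integrable (fun x : ℝ => if x = 0 then deriv (deriv g) 0 / 2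
      else (g x - g 0 - (x:ℂ) * deriv g 0) / (x:ℂ) ^ 2) ρ :=
    aux_phi_integrable hg ⟨Cg, hCg⟩
  have hintM : Integrable (fun x : ℝ =>
      (starRingEnd ℂ) (etaCocycle (fun t => (starRingEnd ℂ) (f t)) x)
        * etaCocycle g x) ρ := by
    refine (integrable_const (Cf * Cg)).mono' ?_ (ae_of_all _ ?_)
    · have m1 : Measurable (fun x : ℝ => (starRingEnd ℂ)
          (etaCocycle (fun t => (starRingEnd ℂ) (f t)) x)) := by
        simp only [hconj]
        exact aux_eta_meas hf.continuous
      exact (m1.mul (aux_eta_meas hg.continuous)).aestronglyMeasurable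
    · intro x
      rw [norm_mul, hconj x]
      have b1 : ‖if x = 0 then deriv f 0 else (f x - f 0) / (x:ℂ)‖ ≤ Cf :=
        aux_eta_bound hfd hCf' x
      have b2 : ‖etaCocycle g x‖ ≤ Cg := aux_eta_bound hgd hCg' x
      have : (0:ℝ) ≤ Cg := (norm_nonneg _).trans (hCg' 0)
      exact mul_le_mul b1 b2 (norm_nonneg _) ((norm_nonneg _).trans b1)
  -- assemble
  simp only [genL]
  have hInt : (∫ x : ℝ, (if x = 0 then deriv (deriv (f * g)) 0 / 2
        else ((f * g) x - (f * g) 0 - (x:ℂ) * deriv (f * g) 0) / (x:ℂ) ^ 2) ∂ρ)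
      = f 0 * (∫ x : ℝ, (if x = 0 then deriv (deriv g) 0 / 2
            else (g x - g 0 - (x:ℂ) * deriv g 0) / (x:ℂ) ^ 2) ∂ρ)
        + ((∫ x : ℝ, (starRingEnd ℂ)
              (etaCocycle (fun t => (starRingEnd ℂ) (f t)) x) * etaCocycle g x ∂ρ)
          + (∫ x : ℝ, (if x = 0 then deriv (deriv f) 0 / 2
              else (f x - f 0 - (x:ℂ) * deriv f 0) / (x:ℂ) ^ 2) ∂ρ) * g 0) := by
    have h2 : Integrable (fun x : ℝ =>
        (starRingEnd ℂ) (etaCocycle (fun t => (starRingEnd ℂ) (f t)) x) * etaCocycle g x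
          + (if x = 0 then deriv (deriv f) 0 / 2
              else (f x - f 0 - (x:ℂ) * deriv f 0) / (x:ℂ) ^ 2) * g 0) ρ :=
      hintM.add (hintF.mul_const (g 0))
    have h3 : Integrable (fun x : ℝ => f 0 * (if x = 0 then deriv (deriv g) 0 / 2
        else (g x - g 0 - (x:ℂ) * deriv g 0) / (x:ℂ) ^ 2)) ρ := hintG.const_mul (f 0)
    have h4 : Integrable (fun x : ℝ => (if x = 0 then deriv (deriv f) 0 / 2
        else (f x - f 0 - (x:ℂ) * deriv f 0) / (x:ℂ) ^ 2) * g 0) ρ :=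
      hintF.mul_const (g 0)
    rw [integral_congr_ae (ae_of_all _ key), integral_add h3 h2, integral_add hintM h4,
      integral_const_mul, integral_mul_const]
  rw [hInt, d10]
  ring
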